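/- arXiv:2410.19237 — 2 statements merged into one kernel-verified Lean document; each statement's English description precedes it below -/
import Mathlib

section
/- Fix an integer n ≥ 2, set b := -n + i, and let D = {0, m} with 2 ≤ m ≤ n². Let (α_j)_{j≥1} be a sequence with α_j ∈ {0, m, -m} for all j, set α := π((α_j)), and assume the radix expansion of α in base (b, {0, ±m}) is unique: for every sequence (β_j)_{j≥1} with β_j ∈ {0, m, -m} and π((β_j)) = α, one has β_j = α_j for all j. Let γ_j := min(D ∩ (D + α_j)) for each j, γ := π((γ_j)), and C(α) := C_{n,D} ∩ (C_{n,D} + α). Suppose there exist N ≥ 1 and maps f_1, …, f_N : ℂ → ℂ, each Lipschitz with some constant strictly less than 1, such that C(α) = ⋃_{i=1}^N f_i(C(α)), and such that f_1(z) = r z + (1 − r)γ for some r ∈ ℂ with 0 < |r| < 1. Then the sequence (m − |α_j|)_{j≥1} is strongly eventually periodic (SEP). -/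
open Complex Filter Pointwise

/-- `piSum b d = ∑_{j≥1} d_j b^{-j}` (0-indexed: `d j` is the `(j+1)`-st digit). -/
noncomputable def piSum (b : ℂ) (d : ℕ → ℤ) : ℂ :=
  ∑' j : ℕ, (d j : ℂ) * b ^ (-((j : ℤ) + 1))

/-- The restricted digit set `C_{n,D}`. -/
def restrictedDigitSet (n : ℕ) (D : Set ℤ) : Set ℂ :=
  {z | ∃ d : ℕ → ℤ, (∀ j, d j ∈ D) ∧ z = piSum (-(n : ℂ) + Complex.I) d}

/-- A sequence `(a_j)_{j≥1}` of integers (0-indexed here) is strongly eventually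
periodic. -/
def SEPSeq (a : ℕ → ℤ) : Prop :=
  ∃ p : ℕ, 0 < p ∧ ∃ bs cs : ℕ → ℤ, (∀ ℓ, 0 ≤ cs ℓ) ∧
    (∀ j < p, a j = bs j) ∧ (∀ j, p ≤ j → a j = bs (j % p) + cs (j % p))

section aux
variable {b : ℂ}

lemma term_norm (d : ℕ → ℤ) (j : ℕ) :
    ‖(d j : ℂ) * b ^ (-((j : ℤ) + 1))‖ = |(d j : ℝ)| * ‖b‖⁻¹ ^ (j + 1) := by
  rw [norm_mul, norm_zpow]
  have h1 : ‖(d j : ℂ)‖ = |(d j : ℝ)| := by norm_cast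
  have h2 : ‖b‖ ^ (-((j:ℤ) + 1)) = ‖b‖⁻¹ ^ (j + 1) := by
    rw [← zpow_natCast (‖b‖⁻¹) (j+1), inv_zpow, ← zpow_neg]
    congr 1
  rw [h1, h2]

lemma summable_aux (hb : 1 < ‖b‖) {M : ℝ} (d : ℕ → ℤ) (hd : ∀ j, |(d j : ℝ)| ≤ M) :
    Summable (fun j : ℕ => (d j : ℂ) * b ^ (-((j : ℤ) + 1))) := by
  have hq0 : (0:ℝ) ≤ ‖b‖⁻¹ := inv_nonneg.2 (norm_nonneg b)
  have hq1 : ‖b‖⁻¹ < 1 := inv_lt_one_of_one_lt₀ hb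
  have hgeo : Summable (fun j : ℕ => (M * ‖b‖⁻¹) * ‖b‖⁻¹ ^ j) :=
    (summable_geometric_of_lt_one hq0 hq1).mul_left _
  apply Summable.of_norm_bounded hgeo
  intro j
  rw [term_norm]
  have h0 : ‖b‖⁻¹ ^ (j + 1) = ‖b‖⁻¹ * ‖b‖⁻¹ ^ j := by ring
  rw [h0]
  have h1 : |(d j : ℝ)| * (‖b‖⁻¹ * ‖b‖⁻¹ ^ j) ≤ M * (‖b‖⁻¹ * ‖b‖⁻¹ ^ j) :=
    mul_le_mul_of_nonneg_right (hd j) (by positivity)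
  linarith [h1]

lemma piSum_sub (hb : 1 < ‖b‖) {M M' : ℝ} (d e : ℕ → ℤ) (hd : ∀ j, |(d j : ℝ)| ≤ M)
    (he : ∀ j, |(e j : ℝ)| ≤ M') :
    piSum b (fun j => d j - e j) = piSum b d - piSum b e := by
  unfold piSum
  rw [← Summable.tsum_sub (summable_aux hb d hd) (summable_aux hb e he)]
  congr 1; funext j; push_cast; ring

lemma piSum_add (hb : 1 < ‖b‖) {M M' : ℝ} (d e : ℕ → ℤ) (hd : ∀ j, |(d j : ℝ)| ≤ M)
    (he : ∀ j, |(e j : ℝ)| ≤ M') :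
    piSum b (fun j => d j + e j) = piSum b d + piSum b e := by
  unfold piSum
  rw [← Summable.tsum_add (summable_aux hb d hd) (summable_aux hb e he)]
  congr 1; funext j; push_cast; ring

lemma piSum_single (j : ℕ) (c : ℤ) :
    piSum b (fun t => if t = j then c else 0) = (c : ℂ) * b ^ (-((j:ℤ) + 1)) := by
  unfold piSum
  rw [tsum_eq_single j]
  · simp
  · intro t ht; simp [ht]

lemma tail_norm_le (hb : 1 < ‖b‖) {M : ℝ} (c : ℕ → ℤ) (hc : ∀ j, |(c j : ℝ)| ≤ M)
    (s : ℕ) :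
    ‖∑' t : ℕ, ((c (t + s) : ℂ) * b ^ (-(((t + s : ℕ) : ℤ) + 1)))‖ ≤
      (M * ‖b‖⁻¹ ^ (s + 1)) * (1 - ‖b‖⁻¹)⁻¹ := by
  set q := ‖b‖⁻¹ with hq
  have hq0 : (0:ℝ) ≤ q := inv_nonneg.2 (norm_nonneg b)
  have hq1 : q < 1 := inv_lt_one_of_one_lt₀ hb
  have hM : 0 ≤ M := le_trans (abs_nonneg _) (hc 0)
  have hle : ∀ t : ℕ, ‖(c (t + s) : ℂ) * b ^ (-(((t + s : ℕ) : ℤ) + 1))‖ ≤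
      (M * q ^ (s + 1)) * q ^ t := by
    intro t
    rw [term_norm (fun u => c u) (t + s)]
    have : q ^ (t + s + 1) = q ^ (s+1) * q ^ t := by ring
    rw [this, ← mul_assoc]
    apply mul_le_mul_of_nonneg_right _ (by positivity)
    exact mul_le_mul_of_nonneg_right (hc (t+s)) (by positivity)
  have hgeo : Summable (fun t : ℕ => (M * q ^ (s + 1)) * q ^ t) :=
    (summable_geometric_of_lt_one hq0 hq1).mul_left _
  have hsum : Summable (fun t : ℕ => ‖(c (t + s) : ℂ) * b ^ (-(((t + s : ℕ) : ℤ) + 1))‖) :=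
    Summable.of_nonneg_of_le (fun t => norm_nonneg _) hle hgeo
  calc ‖∑' t : ℕ, ((c (t + s) : ℂ) * b ^ (-(((t + s : ℕ) : ℤ) + 1)))‖
      ≤ ∑' t : ℕ, ‖(c (t + s) : ℂ) * b ^ (-(((t + s : ℕ) : ℤ) + 1))‖ :=
        norm_tsum_le_tsum_norm hsum
    _ ≤ ∑' t : ℕ, (M * q ^ (s + 1)) * q ^ t := Summable.tsum_le_tsum hle hsum hgeo
    _ = (M * q ^ (s + 1)) * ∑' t : ℕ, q ^ t := tsum_mul_left
    _ = (M * q ^ (s + 1)) * (1 - q)⁻¹ := by rw [tsum_geometric_of_lt_one hq0 hq1]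

/-- Uniqueness of `{0,m}`-digit expansions in a base of norm `> 2`. -/
lemma expansion_unique (hb : 2 < ‖b‖) {m : ℤ} (hm : 0 < m) {d e : ℕ → ℤ}
    (hd : ∀ j, d j = 0 ∨ d j = m) (he : ∀ j, e j = 0 ∨ e j = m)
    (h : piSum b d = piSum b e) : ∀ j, d j = e j := by
  have hb1 : 1 < ‖b‖ := by linarith
  by_contra hcon
  push_neg at hcon
  have hex : ∃ t, d t ≠ e t := hcon
  set ℓ := Nat.find hex with hℓ
  have hℓne : d ℓ ≠ e ℓ := Nat.find_spec hex
  have hℓmin : ∀ t < ℓ, d t = e t := by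
    intro t ht
    by_contra hne
    have h5 : ℓ ≤ t := Nat.find_le hne
    omega
  set c : ℕ → ℤ := fun t => d t - e t with hc
  have hcM : ∀ t, |(c t : ℝ)| ≤ (m : ℝ) := by
    intro t
    have h9 : |c t| ≤ m := by
      have hct : c t = d t - e t := rfl
      rw [abs_le]
      rcases hd t with h1 | h1 <;> rcases he t with h2 | h2 <;> omega
    calc |(c t : ℝ)| = ((|c t| : ℤ) : ℝ) := by rw [Int.cast_abs]
      _ ≤ (m : ℝ) := by exact_mod_cast h9
  have hdM : ∀ t, |(d t : ℝ)| ≤ (m : ℝ) := by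
    intro t
    have h9 : |d t| ≤ m := by rcases hd t with h1 | h1 <;> rw [abs_le] <;> omega
    calc |(d t : ℝ)| = ((|d t| : ℤ) : ℝ) := by rw [Int.cast_abs]
      _ ≤ (m : ℝ) := by exact_mod_cast h9
  have heM : ∀ t, |(e t : ℝ)| ≤ (m : ℝ) := by
    intro t
    have h9 : |e t| ≤ m := by rcases he t with h1 | h1 <;> rw [abs_le] <;> omega
    calc |(e t : ℝ)| = ((|e t| : ℤ) : ℝ) := by rw [Int.cast_abs]
      _ ≤ (m : ℝ) := by exact_mod_cast h9
  have hsumc : Summable (fun t : ℕ => (c t : ℂ) * b ^ (-((t : ℤ) + 1))) :=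
    summable_aux hb1 c hcM
  have hzero : ∑' t : ℕ, (c t : ℂ) * b ^ (-((t : ℤ) + 1)) = 0 := by
    have hps : piSum b (fun j => d j - e j) = piSum b d - piSum b e :=
      piSum_sub hb1 d e hdM heM
    have : piSum b (fun j => d j - e j) = 0 := by rw [hps, h, sub_self]
    exact this
  have hsplit := Summable.sum_add_tsum_nat_add (f := fun t : ℕ => (c t : ℂ) * b ^ (-((t : ℤ) + 1)))
    (ℓ + 1) hsumc
  have hhead : ∑ i ∈ Finset.range (ℓ + 1), (c i : ℂ) * b ^ (-((i : ℤ) + 1))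
      = (c ℓ : ℂ) * b ^ (-((ℓ : ℤ) + 1)) := by
    apply Finset.sum_eq_single_of_mem ℓ (Finset.self_mem_range_succ ℓ)
    intro i hi hne
    have : i < ℓ := by
      have := Finset.mem_range.mp hi; omega
    have : c i = 0 := by rw [hc]; simp [hℓmin i this]
    rw [this]; simp
  have hkey : (c ℓ : ℂ) * b ^ (-((ℓ : ℤ) + 1)) =
      - ∑' t : ℕ, ((c (t + (ℓ+1)) : ℂ) * b ^ (-(((t + (ℓ+1) : ℕ) : ℤ) + 1))) := by
    have := hsplit
    rw [hhead, hzero] at this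
    linear_combination this
  have hq0 : (0:ℝ) < ‖b‖⁻¹ := inv_pos.2 (by linarith)
  have hq1 : ‖b‖⁻¹ < 1 := inv_lt_one_of_one_lt₀ hb1
  have hq2 : ‖b‖⁻¹ < 1/2 := by
    rw [inv_lt_comm₀ (by linarith) (by norm_num)]
    linarith [hb]
  set q := ‖b‖⁻¹ with hqdef
  have hlow : (m:ℝ) * q ^ (ℓ + 1) ≤ ‖(c ℓ : ℂ) * b ^ (-((ℓ : ℤ) + 1))‖ := by
    rw [term_norm (fun u => c u) ℓ]
    have h8 : |c ℓ| = m := by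
      have hct : c ℓ = d ℓ - e ℓ := rfl
      have h7 : c ℓ = m ∨ c ℓ = -m := by
        rcases hd ℓ with h1 | h1 <;> rcases he ℓ with h2 | h2 <;> omega
      rcases h7 with h7 | h7
      · rw [h7, abs_of_pos hm]
      · rw [h7, abs_neg, abs_of_pos hm]
    have habs : |(c ℓ : ℝ)| = (m : ℝ) := by
      rw [← Int.cast_abs, h8]
    rw [habs]
  have hhigh : ‖(c ℓ : ℂ) * b ^ (-((ℓ : ℤ) + 1))‖ ≤
      ((m:ℝ) * q ^ (ℓ + 2)) * (1 - q)⁻¹ := by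
    rw [hkey, norm_neg]
    exact tail_norm_le hb1 c hcM (ℓ + 1)
  have hineq : (m:ℝ) * q ^ (ℓ + 1) ≤ ((m:ℝ) * q ^ (ℓ + 2)) * (1 - q)⁻¹ :=
    le_trans hlow hhigh
  have h1q : (0:ℝ) < 1 - q := by linarith
  rw [← div_eq_mul_inv, le_div_iff₀ h1q] at hineq
  have hA : (0:ℝ) < q ^ (ℓ + 1) := by positivity
  have hmR : (0:ℝ) < (m:ℝ) := by exact_mod_cast hm
  nlinarith [hineq, mul_pos hmR hA, pow_succ q (ℓ+1)]

lemma piSum_shift (hb1 : 1 < ‖b‖) (hb0 : b ≠ 0) {m : ℤ} (hm : 0 < m) (δ : ℕ → ℤ)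
    (hδ : ∀ t, δ t = 0 ∨ δ t = m) (k : ℕ) :
    piSum b (fun t => if k ≤ t then δ (t - k) else 0) = b ^ (-(k:ℤ)) * piSum b δ := by
  have hbound : ∀ t : ℕ, |(((if k ≤ t then δ (t - k) else 0 : ℤ)) : ℝ)| ≤ (m : ℝ) := by
    intro t
    have h9 : |(if k ≤ t then δ (t - k) else 0 : ℤ)| ≤ m := by
      split
      · rcases hδ (t - k) with h | h <;> rw [abs_le] <;> omega
      · rw [abs_le]; omega
    calc |(((if k ≤ t then δ (t - k) else 0 : ℤ)) : ℝ)|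
        = ((|if k ≤ t then δ (t - k) else 0| : ℤ) : ℝ) := by rw [Int.cast_abs]
      _ ≤ (m : ℝ) := by exact_mod_cast h9
  have hsum : Summable (fun t : ℕ =>
      ((if k ≤ t then δ (t - k) else 0 : ℤ) : ℂ) * b ^ (-((t:ℤ) + 1))) :=
    summable_aux hb1 _ hbound
  have hsplit := Summable.sum_add_tsum_nat_add
    (f := fun t : ℕ => ((if k ≤ t then δ (t - k) else 0 : ℤ) : ℂ) * b ^ (-((t:ℤ) + 1)))
    k hsum
  have hhead : ∑ i ∈ Finset.range k,
      ((if k ≤ i then δ (i - k) else 0 : ℤ) : ℂ) * b ^ (-((i:ℤ) + 1)) = 0 := by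
    apply Finset.sum_eq_zero
    intro i hi
    have : ¬ (k ≤ i) := by have := Finset.mem_range.mp hi; omega
    rw [if_neg this]
    simp
  have htail : ∀ i : ℕ,
      ((if k ≤ i + k then δ (i + k - k) else 0 : ℤ) : ℂ) * b ^ (-(((i + k : ℕ):ℤ) + 1))
      = ((δ i : ℂ) * b ^ (-((i:ℤ) + 1))) * b ^ (-(k:ℤ)) := by
    intro i
    rw [if_pos (Nat.le_add_left k i)]
    have h1 : i + k - k = i := by omega
    rw [h1, mul_assoc, ← zpow_add₀ hb0]
    congr 2
    push_cast
    ring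
  have htsum : ∑' i : ℕ,
      ((if k ≤ i + k then δ (i + k - k) else 0 : ℤ) : ℂ) * b ^ (-(((i + k : ℕ):ℤ) + 1))
      = (piSum b δ) * b ^ (-(k:ℤ)) := by
    rw [tsum_congr htail]
    rw [tsum_mul_right]
    rfl
  unfold piSum
  rw [← hsplit, hhead, zero_add, htsum, mul_comm]
  rfl

end aux

theorem stmt_16 (n : ℕ) (hn : 2 ≤ n) (m : ℤ) (hm : 2 ≤ m ∧ m ≤ (n : ℤ) ^ 2)
    (α : ℕ → ℤ) (hα : ∀ j, α j ∈ ({0, m, -m} : Set ℤ))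
    (huniq : ∀ β : ℕ → ℤ, (∀ j, β j ∈ ({0, m, -m} : Set ℤ)) →
      piSum (-(n : ℂ) + Complex.I) β = piSum (-(n : ℂ) + Complex.I) α →
      ∀ j, β j = α j)
    (γ : ℕ → ℤ)
    (hγ : ∀ j, IsLeast (({0, m} : Set ℤ) ∩ (({0, m} : Set ℤ) + {α j})) (γ j))
    (Cα : Set ℂ)
    (hCα : Cα = restrictedDigitSet n {0, m} ∩
      (restrictedDigitSet n {0, m} + {piSum (-(n : ℂ) + Complex.I) α}))
    (N : ℕ) (hN : 1 ≤ N) (f : Fin N → ℂ → ℂ)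
    (hLip : ∀ i, ∃ c : NNReal, c < 1 ∧ LipschitzWith c (f i))
    (hattr : Cα = ⋃ i : Fin N, f i '' Cα)
    (r : ℂ) (hr : 0 < ‖r‖ ∧ ‖r‖ < 1)
    (hf0 : f ⟨0, hN⟩ = fun z =>
      r * z + (1 - r) * piSum (-(n : ℂ) + Complex.I) γ) :
    SEPSeq (fun j => m - |α j|) := by
  classical
  set B : ℂ := -(n : ℂ) + Complex.I with hB
  have hnR : (2:ℝ) ≤ (n:ℝ) := by exact_mod_cast hn
  have hsq : ‖B‖^2 = (n:ℝ)^2 + 1 := by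
    rw [hB, Complex.sq_norm, Complex.normSq_apply]
    simp
    ring
  have hB2 : 2 < ‖B‖ := by nlinarith [norm_nonneg B]
  have hB1 : 1 < ‖B‖ := by linarith
  have hB0 : B ≠ 0 := by
    intro h
    rw [h] at hB1
    simp at hB1
    linarith
  have hm2 : (2:ℤ) ≤ m := hm.1
  have hmpos : (0:ℤ) < m := by omega
  have hαcases : ∀ t, α t = 0 ∨ α t = m ∨ α t = -m := by
    intro t; simpa using hα t
  have hγ01 : ∀ t, γ t = 0 ∨ γ t = m := by
    intro t; simpa using (hγ t).1.1
  have hγα : ∀ t, γ t - α t = 0 ∨ γ t - α t = m := by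
    intro t
    have h1 := (hγ t).1.2
    rw [Set.add_singleton] at h1
    simp only [Set.mem_image, Set.mem_insert_iff, Set.mem_singleton_iff] at h1
    obtain ⟨x, hx, hxe⟩ := h1
    rcases hx with hx | hx <;> omega
  have hγ0 : ∀ t, α t = 0 → γ t = 0 := by
    intro t ht
    have h1 : (0:ℤ) ∈ ({0, m} : Set ℤ) ∩ (({0, m} : Set ℤ) + {α t}) := by
      constructor
      · simp
      · rw [Set.add_singleton]
        exact ⟨0, by simp, by simp [ht]⟩
    have h2 := (hγ t).2 h1
    have h3 := hγ01 t
    omega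
  have hcast : ∀ (d : ℕ → ℤ), (∀ t, |d t| ≤ m) → ∀ t, |(d t : ℝ)| ≤ (m:ℝ) := by
    intro d hd t
    calc |(d t : ℝ)| = ((|d t| : ℤ) : ℝ) := by rw [Int.cast_abs]
      _ ≤ (m : ℝ) := by exact_mod_cast hd t
  have hγM : ∀ t, |(γ t : ℝ)| ≤ (m:ℝ) := hcast γ (by intro t; have := hγ01 t; rw [abs_le]; omega)
  have hαM : ∀ t, |(α t : ℝ)| ≤ (m:ℝ) := hcast α (by intro t; have := hαcases t; rw [abs_le]; omega)
  -- the key "extraction" property, using uniqueness of the expansion of α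
  have key : ∀ v : ℂ, piSum B γ + v ∈ Cα →
      ∃ δ : ℕ → ℤ, (∀ t, δ t = 0 ∨ (α t = 0 ∧ δ t = m)) ∧ v = piSum B δ := by
    intro v hv
    rw [hCα] at hv
    obtain ⟨hv1, hv2⟩ := hv
    obtain ⟨d, hd, hdEq⟩ := hv1
    rw [Set.add_singleton] at hv2
    obtain ⟨y, hy, hyEq⟩ := hv2
    obtain ⟨e, he, rfl⟩ := hy
    have hd' : ∀ t, d t = 0 ∨ d t = m := by intro t; simpa using hd t
    have he' : ∀ t, e t = 0 ∨ e t = m := by intro t; simpa using he t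
    have hdM : ∀ t, |(d t : ℝ)| ≤ (m:ℝ) := hcast d (by intro t; have := hd' t; rw [abs_le]; omega)
    have heM : ∀ t, |(e t : ℝ)| ≤ (m:ℝ) := hcast e (by intro t; have := he' t; rw [abs_le]; omega)
    have hβ : piSum B (fun j => d j - e j) = piSum B α := by
      rw [piSum_sub hB1 d e hdM heM]
      simp only at hyEq
      linear_combination - hdEq - hyEq
    have hβmem : ∀ t, (fun j => d j - e j) t ∈ ({0, m, -m} : Set ℤ) := by
      intro t
      simp only [Set.mem_insert_iff, Set.mem_singleton_iff]
      rcases hd' t with h1 | h1 <;> rcases he' t with h2 | h2 <;> omega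
    have hβα := huniq _ hβmem hβ
    refine ⟨fun t => d t - γ t, ?_, ?_⟩
    · intro t
      show d t - γ t = 0 ∨ (α t = 0 ∧ d t - γ t = m)
      have h1 := hβα t
      have h2 := hd' t
      have h3 := he' t
      have h4 := hγ01 t
      have h5 := hγα t
      rcases hαcases t with h | h | h
      · have h6 := hγ0 t h
        omega
      · omega
      · omega
    · rw [piSum_sub hB1 d γ hdM hγM]
      linear_combination hdEq
  -- inserting a single digit at an "active" position
  have ins : ∀ j : ℕ, α j = 0 → piSum B γ + (m:ℂ) * B ^ (-((j:ℤ)+1)) ∈ Cα := by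
    intro j hj
    have hγj := hγ0 j hj
    rw [hCα]
    constructor
    · refine ⟨fun t => γ t + (if t = j then m else 0), ?_, ?_⟩
      · intro t
        show γ t + (if t = j then m else 0) ∈ ({0, m} : Set ℤ)
        by_cases ht : t = j
        · subst ht
          rw [if_pos rfl, hγj]
          simp
        · rw [if_neg ht, add_zero]
          exact (hγ t).1.1
      · rw [piSum_add hB1 γ (fun t => if t = j then m else 0) hγM
          (hcast (fun t => if t = j then m else 0)
            (by intro t; split <;> rw [abs_le] <;> omega)), piSum_single j m]
    · rw [Set.add_singleton]
      refine ⟨piSum B (fun t => (γ t - α t) + (if t = j then m else 0)), ⟨_, ?_, rfl⟩, ?_⟩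
      · intro t
        show γ t - α t + (if t = j then m else 0) ∈ ({0, m} : Set ℤ)
        by_cases ht : t = j
        · subst ht
          rw [if_pos rfl, hγj, hj]
          simp
        · rw [if_neg ht, add_zero]
          have := hγα t
          simp only [Set.mem_insert_iff, Set.mem_singleton_iff]
          omega
      · have hb1 : piSum B (fun t => ((γ t - α t) + (if t = j then m else 0)) + α t)
            = piSum B (fun t => (γ t - α t) + (if t = j then m else 0)) + piSum B α := by
          apply piSum_add hB1 (fun t => (γ t - α t) + (if t = j then m else 0)) α
            (hcast (fun t => (γ t - α t) + (if t = j then m else 0)) (by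
              intro t
              have h5 := hγα t
              by_cases ht : t = j
              · subst ht
                rw [if_pos rfl, hγj, hj, abs_le]
                omega
              · rw [if_neg ht, abs_le]
                omega)) hαM
        have hb2 : piSum B (fun t => ((γ t - α t) + (if t = j then m else 0)) + α t)
            = piSum B γ + (m:ℂ) * B ^ (-((j:ℤ)+1)) := by
          have hfe : (fun t => ((γ t - α t) + (if t = j then m else 0)) + α t)
              = fun t => γ t + (if t = j then m else 0) := by
            funext t; ring
          rw [hfe, piSum_add hB1 γ (fun t => if t = j then m else 0) hγM
            (hcast (fun t => if t = j then m else 0)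
              (by intro t; split <;> rw [abs_le] <;> omega)), piSum_single j m]
        simp only
        rw [← hb1, hb2]
  -- applying the first map of the IFS
  have step : ∀ v : ℂ, piSum B γ + v ∈ Cα → piSum B γ + r * v ∈ Cα := by
    intro v hv
    have h1 : f ⟨0, hN⟩ (piSum B γ + v) ∈ Cα := by
      rw [hattr]
      exact Set.mem_iUnion.2 ⟨⟨0, hN⟩, Set.mem_image_of_mem _ hv⟩
    rw [hf0] at h1
    simp only at h1
    have h2 : r * (piSum B γ + v) + (1 - r) * piSum B γ = piSum B γ + r * v := by ring
    rwa [h2] at h1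
  -- reduce to finding a shift period for the zero set of α
  have hSEP : ∀ p : ℕ, 1 ≤ p → (∀ j, α j = 0 → α (j + p) = 0) →
      SEPSeq (fun j => m - |α j|) := by
    intro p hp1 hstep
    have hiter : ∀ w, α w = 0 → ∀ k, α (w + k * p) = 0 := by
      intro w hw k
      induction k with
      | zero => simpa using hw
      | succ k ih =>
        have h1 := hstep _ ih
        have h2 : w + k * p + p = w + (k+1) * p := by ring
        rwa [h2] at h1
    have hreach : ∀ w j, α w = 0 → w ≤ j → j % p = w % p → α j = 0 := by
      intro w j hw hle hmod
      have hdvd : p ∣ j - w := (Nat.modEq_iff_dvd' hle).mp (by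
        show w % p = j % p
        omega)
      obtain ⟨k, hk⟩ := hdvd
      have h1 : j = p * k + w := (Nat.sub_eq_iff_eq_add hle).mp hk
      have h2 : p * k + w = w + k * p := by ring
      rw [h1, h2]
      exact hiter w hw k
    set E : ℕ → Prop := fun ℓ => ∃ w, α w = 0 ∧ w % p = ℓ % p with hE
    set V : ℕ → ℕ := fun ρ => if h : ∃ w, α w = 0 ∧ w % p = ρ then Nat.find h else 0 with hV
    set S₀ : ℕ := (Finset.range p).sup V with hS₀
    set P : ℕ := p * (S₀ + 1) with hP
    have hPpos : 0 < P := by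
      have : 0 < p := hp1
      positivity
    have hpP : p ∣ P := ⟨S₀ + 1, rfl⟩
    have hVP : ∀ ρ, ρ < p → V ρ < P := by
      intro ρ hρ
      have h1 : V ρ ≤ S₀ := Finset.le_sup (Finset.mem_range.mpr hρ)
      have h2 : 1 * (S₀ + 1) ≤ p * (S₀ + 1) := Nat.mul_le_mul_right _ (by omega)
      omega
    have hval : ∀ j, P ≤ j → (m - |α j| = if E j then m else 0) := by
      intro j hjP
      by_cases hEj : E j
      · rw [if_pos hEj]
        have hρ : j % p < p := Nat.mod_lt _ (by omega)
        have hex : ∃ w', α w' = 0 ∧ w' % p = j % p := hEj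
        have hfind := Nat.find_spec hex
        have hVlt : Nat.find hex < P := by
          have h1 : V (j % p) = Nat.find hex := by
            rw [hV]
            simp only
            rw [dif_pos hex]
          have h2 := hVP (j % p) hρ
          omega
        have hα0 : α j = 0 :=
          hreach (Nat.find hex) j hfind.1 (by omega) hfind.2.symm
        rw [hα0]
        simp
      · rw [if_neg hEj]
        have hj0 : α j ≠ 0 := fun h => hEj ⟨j, h, rfl⟩
        rcases hαcases j with h | h | h
        · exact absurd h hj0
        · rw [h, abs_of_nonneg (by omega : (0:ℤ) ≤ m)]
          omega
        · rw [h, abs_neg, abs_of_nonneg (by omega : (0:ℤ) ≤ m)]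
          omega
    refine ⟨P, hPpos, (fun j => m - |α j|),
      (fun ℓ => (if E ℓ then m else 0) - (m - |α ℓ|)), ?_, ?_, ?_⟩
    · intro ℓ
      show (0:ℤ) ≤ (if E ℓ then m else 0) - (m - |α ℓ|)
      by_cases h0 : α ℓ = 0
      · have hEℓ : E ℓ := ⟨ℓ, h0, rfl⟩
        rw [if_pos hEℓ, h0]
        simp
      · have habs : |α ℓ| = m := by
          rcases hαcases ℓ with h | h | h
          · exact absurd h h0
          · rw [h, abs_of_nonneg (by omega : (0:ℤ) ≤ m)]
          · rw [h, abs_neg, abs_of_nonneg (by omega : (0:ℤ) ≤ m)]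
        rw [habs]
        split <;> omega
    · intro j hj
      rfl
    · intro j hjP
      have hmm : (j % P) % p = j % p := Nat.mod_mod_of_dvd j hpP
      have hEiff : E (j % P) ↔ E j := by
        rw [hE]
        simp only
        rw [hmm]
      have h9 : (m - |α (j % P)|) + ((if E (j % P) then m else 0) - (m - |α (j % P)|))
          = if E (j % P) then m else 0 := by ring
      show m - |α j| = (m - |α (j % P)|) + ((if E (j % P) then m else 0) - (m - |α (j % P)|))
      rw [h9, if_congr hEiff rfl rfl]
      exact hval j hjP
  -- main case split
  by_cases hJ : ∃ j, α j = 0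
  · set j₀ := Nat.find hJ with hj₀def
    have hj₀ : α j₀ = 0 := Nat.find_spec hJ
    have h1 := ins j₀ hj₀
    have h2 := step _ h1
    obtain ⟨δ, hδ, hδeq⟩ := key _ h2
    have hδ01 : ∀ t, δ t = 0 ∨ δ t = m := by
      intro t
      rcases hδ t with h | h
      · exact Or.inl h
      · exact Or.inr h.2
    -- find a second active position in the expansion of r * (m B^{-j₀-1})
    have hne : ∃ i₀, i₀ ≠ j₀ ∧ δ i₀ ≠ 0 := by
      by_contra hno
      push_neg at hno
      have hsingle : piSum B δ = (δ j₀ : ℂ) * B ^ (-((j₀:ℤ)+1)) := by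
        unfold piSum
        exact tsum_eq_single j₀ (fun t ht => by rw [hno t ht]; simp)
      have heq : r * ((m:ℂ) * B ^ (-((j₀:ℤ)+1))) = (δ j₀ : ℂ) * B ^ (-((j₀:ℤ)+1)) := by
        rw [← hsingle, ← hδeq]
      have hz : B ^ (-((j₀:ℤ)+1)) ≠ 0 := zpow_ne_zero _ hB0
      have hrm : r * (m:ℂ) = (δ j₀ : ℂ) := by
        have h3 : (r * (m:ℂ)) * B ^ (-((j₀:ℤ)+1)) = (δ j₀ : ℂ) * B ^ (-((j₀:ℤ)+1)) := by
          rw [mul_assoc]; exact heq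
        exact mul_right_cancel₀ hz h3
      have hmC : (m:ℂ) ≠ 0 := by
        exact_mod_cast (by omega : m ≠ 0)
      rcases hδ j₀ with h | h
      · rw [h] at hrm
        simp only [Int.cast_zero] at hrm
        have : r = 0 := by
          rcases mul_eq_zero.mp hrm with h' | h'
          · exact h'
          · exact absurd h' hmC
        rw [this] at hr
        simp at hr
      · rw [h.2] at hrm
        have hr1 : r = 1 := by
          have := hrm
          field_simp at this
          tauto
        rw [hr1] at hr
        simp at hr
    obtain ⟨i₀, hi₀ne, hi₀⟩ := hne
    have hi₀' : α i₀ = 0 ∧ δ i₀ = m := by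
      rcases hδ i₀ with h | h
      · exact absurd h hi₀
      · exact h
    have hj₀le : j₀ ≤ i₀ := Nat.find_min' hJ hi₀'.1
    have hi₀gt : j₀ < i₀ := by omega
    refine hSEP (i₀ - j₀) (by omega) ?_
    intro j hj
    have hjle : j₀ ≤ j := Nat.find_min' hJ hj
    have h1' := ins j hj
    have h2' := step _ h1'
    obtain ⟨δ', hδ', hδ'eq⟩ := key _ h2'
    have hδ'01 : ∀ t, δ' t = 0 ∨ δ' t = m := by
      intro t
      rcases hδ' t with h | h
      · exact Or.inl h
      · exact Or.inr h.2
    have hshift := piSum_shift hB1 hB0 hmpos δ hδ01 (j - j₀)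
    have hzp : B ^ (-((j - j₀ : ℕ):ℤ)) * B ^ (-((j₀:ℤ)+1)) = B ^ (-((j:ℤ)+1)) := by
      rw [← zpow_add₀ hB0]
      congr 1
      push_cast [Nat.cast_sub hjle]
      ring
    have hval2 : piSum B (fun t => if (j - j₀) ≤ t then δ (t - (j - j₀)) else 0)
        = piSum B δ' := by
      rw [hshift, ← hδeq, ← hδ'eq, ← hzp]
      ring
    have huniq2 := expansion_unique hB2 hmpos
      (d := fun t => if (j - j₀) ≤ t then δ (t - (j - j₀)) else 0) (e := δ')
      (by
        intro t
        show (if (j - j₀) ≤ t then δ (t - (j - j₀)) else 0) = 0 ∨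
          (if (j - j₀) ≤ t then δ (t - (j - j₀)) else 0) = m
        split
        · exact hδ01 _
        · exact Or.inl rfl)
      hδ'01 hval2
    have ht : (if (j - j₀) ≤ i₀ + (j - j₀) then δ (i₀ + (j - j₀) - (j - j₀)) else 0)
        = δ' (i₀ + (j - j₀)) := huniq2 (i₀ + (j - j₀))
    rw [if_pos (Nat.le_add_left _ _)] at ht
    have h7 : i₀ + (j - j₀) - (j - j₀) = i₀ := by omega
    rw [h7, hi₀'.2] at ht
    have h8 : δ' (i₀ + (j - j₀)) ≠ 0 := by omega
    rcases hδ' (i₀ + (j - j₀)) with h | h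
    · exact absurd h h8
    · have h9 : i₀ + (j - j₀) = j + (i₀ - j₀) := by omega
      rw [h9] at h
      exact h.1
  · refine hSEP 1 le_rfl ?_
    intro j hj
    exact absurd ⟨j, hj⟩ hJ
end

section
/- Fix an integer n ≥ 2, set b := -n + i, and let D ⊆ {0, 1, …, n²} be such that Δ := D − D is sparse. Let (α_j)_{j≥1} be a sequence with α_j ∈ Δ for all j, set α := π((α_j)), and let C(α) := C_{n,D} ∩ (C_{n,D} + α). Suppose there exists β = π((β_j)) with β_j ∈ D ∩ (D + α_j) for all j such that the sequence of sets ((D ∩ (D + α_j)) − β_j)_{j≥1} is strongly eventually periodic with data: a positive integer p and nonempty finite subsets A_1, …, A_p and U_1, …, U_p of ℤ satisfying (D ∩ (D + α_ℓ)) − β_ℓ = A_ℓ for 1 ≤ ℓ ≤ p and (D ∩ (D + α_j)) − β_j = A_ℓ + U_ℓ whenever j > p and j ≡ ℓ (mod p). Then C(α) = ⋃ f_{a,u}(C(α)), where the union is over all tuples (a_1, …, a_p) and (u_1, …, u_p) with a_ℓ ∈ A_ℓ and u_ℓ ∈ U_ℓ for each ℓ, and f_{a,u}(x) := b^{-p}(x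 + Σ_{ℓ=1}^p (a_ℓ b^{p−ℓ} + u_ℓ b^{−ℓ}) − β) + β. In particular, C(α) is self-similar. -/
open Complex Filter Pointwise

/-- `Δ` is sparse: all distinct pairs differ by more than `2` when `n ≥ 5`,
and by more than `3` when `n ∈ {2, 3, 4}`. -/
def Sparse (n : ℕ) (Δ : Set ℤ) : Prop :=
  ∀ δ ∈ Δ, ∀ δ' ∈ Δ, δ ≠ δ' →
    (5 ≤ n → 2 < |δ - δ'|) ∧ (n = 2 ∨ n = 3 ∨ n = 4 → 3 < |δ - δ'|)

lemma intSqBound {a k : ℤ} (hk : 0 ≤ k) (h : a^2 < (k+1)^2) : -k ≤ a ∧ a ≤ k := by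
  constructor
  · by_contra hc; push_neg at hc
    have h2 : (k+1)^2 ≤ (-a)^2 := pow_le_pow_left₀ (by linarith) (by linarith) 2
    rw [show (-a)^2 = a^2 by ring] at h2; linarith
  · by_contra hc; push_neg at hc
    have h2 : (k+1)^2 ≤ a^2 := pow_le_pow_left₀ (by linarith) (by linarith) 2
    linarith

lemma habsB {n a c : ℤ} (hn : 2 ≤ n) (h : a^2 + c^2 ≤ 4*n^2+8*n+12) :
    -(2*n+2) ≤ a ∧ a ≤ 2*n+2 := by
  have := sq_nonneg c
  exact intSqBound (by linarith) (by nlinarith)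

lemma corePos (n g d x2 x3 x4 x5 : ℤ) (hn : 2 ≤ n)
    (hg : (5 ≤ n ∧ g = 3) ∨ (n < 5 ∧ g = 4))
    (hd : g ≤ d)
    (h1 : d^2 ≤ 4*n^2+8*n+12)
    (h2 : x2^2 + d^2 ≤ 4*n^2+8*n+12)
    (hc1b : |x2 + n*d| ≤ 2*n^2)
    (h3 : x3^2 + (x2 - n*d)^2 ≤ 4*n^2+8*n+12)
    (h4 : x4^2 + (x3 - n*(x2 - n*d))^2 ≤ 4*n^2+8*n+12)
    (h5 : x5^2 + (x4 - n*(x3 - n*(x2 - n*d)))^2 ≤ 4*n^2+8*n+12) : False := by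
  have hd3 : 3 ≤ d := by rcases hg with ⟨h5n, rfl⟩ | ⟨h5n, rfl⟩ <;> omega
  have hx2ub : x2 ≤ 2*n+2 := (habsB hn h2).2
  have hx3 : -(2*n+2) ≤ x3 ∧ x3 ≤ 2*n+2 := habsB hn h3
  have hx4 : -(2*n+2) ≤ x4 ∧ x4 ≤ 2*n+2 := habsB hn h4
  have hy4 : -(2*n+2) ≤ x3 - n*(x2 - n*d) ∧ x3 - n*(x2 - n*d) ≤ 2*n+2 :=
    habsB hn (by linarith : (x3 - n*(x2 - n*d))^2 + x4^2 ≤ 4*n^2+8*n+12)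
  have hy3 : -(2*n+2) ≤ x2 - n*d ∧ x2 - n*d ≤ 2*n+2 :=
    habsB hn (by linarith : (x2 - n*d)^2 + x3^2 ≤ 4*n^2+8*n+12)
  have hm1 : n - 2 ≤ n*d - x2 := by
    nlinarith [mul_le_mul_of_nonneg_left hd3 (by linarith : (0:ℤ) ≤ n)]
  have hm2 : n*(n*d - x2) ≤ 4*n + 4 := by nlinarith [hy4.2, hx3.1]
  rcases le_or_gt 7 n with h7 | h7
  · have := mul_le_mul_of_nonneg_left hm1 (by linarith : (0:ℤ) ≤ n)
    nlinarith [mul_nonneg (by linarith : (0:ℤ) ≤ n - 7) (by linarith : (0:ℤ) ≤ n)]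
  · have hd4 : n < 5 → 4 ≤ d := by
      intro h'; rcases hg with ⟨h5n, rfl⟩ | ⟨h5n, rfl⟩ <;> omega
    interval_cases n
    · -- n = 2
      have hc := abs_le.mp hc1b
      have := hd4 (by norm_num)
      linarith [hy3.1, hc.2]
    · -- n = 3
      have hdd := hd4 (by norm_num)
      have hd2 : (16:ℤ) ≤ d^2 := by
        have : (4:ℤ)^2 ≤ d^2 := pow_le_pow_left₀ (by norm_num) hdd 2
        linarith
      have hx2 : x2 ≤ 7 :=
        (intSqBound (by norm_num) (by linarith : x2^2 < (7+1)^2)).2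
      have hmle : 3*d - x2 < 6 := by linarith
      have hmle' : 3*d - x2 ≤ 5 := by linarith [Int.lt_iff_add_one_le.mp hmle]
      have hde : d = 4 := le_antisymm (by linarith) hdd
      have hxe : x2 = 7 := le_antisymm hx2 (by linarith)
      subst hde hxe
      have hx3' : -6 ≤ x3 :=
        (intSqBound (by norm_num) (by linarith : x3^2 < (6+1)^2)).1
      linarith [hy4.2]
    · -- n = 4
      have hdd := hd4 (by norm_num)
      have hmle : 4*d - x2 ≤ 5 := by linarith
      have hx2ge : 11 ≤ x2 := by linarith
      have h121 : (121:ℤ) ≤ x2^2 := by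
        have : (11:ℤ)^2 ≤ x2^2 := pow_le_pow_left₀ (by norm_num) hx2ge 2
        linarith
      have hd2 : (16:ℤ) ≤ d^2 := by
        have : (4:ℤ)^2 ≤ d^2 := pow_le_pow_left₀ (by norm_num) hdd 2
        linarith
      linarith
    · -- n = 5
      have hd2 : (9:ℤ) ≤ d^2 := by
        have : (3:ℤ)^2 ≤ d^2 := pow_le_pow_left₀ (by norm_num) hd3 2
        linarith
      have hx2 : x2 ≤ 11 :=
        (intSqBound (by norm_num) (by linarith : x2^2 < (11+1)^2)).2
      have hmlt : 5*d - x2 < 5 := by linarith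
      have hmle : 5*d - x2 ≤ 4 := by linarith [Int.lt_iff_add_one_le.mp hmlt]
      have hde : d = 3 := le_antisymm (by linarith) hd3
      have hxe : x2 = 11 := le_antisymm hx2 (by linarith)
      subst hde hxe
      have hx3' : -11 ≤ x3 :=
        (intSqBound (by norm_num) (by linarith : x3^2 < (11+1)^2)).1
      have hy5 : x4 - 5*(x3 - 5*(11 - 5*3)) ≤ -33 := by linarith [hx4.2]
      linarith [sq_nonneg x5, sq_nonneg (x4 - 5*(x3 - 5*(11 - 5*3)) + 33), h5]
    · -- n = 6
      have hmlt : 6*d - x2 < 5 := by linarith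
      have hge : 13 ≤ x2 := by linarith
      have h169 : (169:ℤ) ≤ x2^2 := by
        have : (13:ℤ)^2 ≤ x2^2 := pow_le_pow_left₀ (by norm_num) hge 2
        linarith
      have hd2 : (9:ℤ) ≤ d^2 := by
        have : (3:ℤ)^2 ≤ d^2 := pow_le_pow_left₀ (by norm_num) hd3 2
        linarith
      -- x2 ≥ 6d - 4 ≥ 14 so x2^2 ≥ 196, 196 + 9 > 204
      have hm6 : 6*d - x2 ≤ 4 := by linarith [Int.lt_iff_add_one_le.mp hmlt]
      have hge14 : 14 ≤ x2 := by linarith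
      have h196 : (196:ℤ) ≤ x2^2 := by
        have : (14:ℤ)^2 ≤ x2^2 := pow_le_pow_left₀ (by norm_num) hge14 2
        linarith
      linarith


section toolkit
variable {b : ℂ} (hb : 2 ≤ ‖b‖)

lemma key_abs (w : ℕ → ℤ) (j : ℕ) :
    ‖(w j : ℂ) * b ^ (-((j : ℤ) + 1))‖ = |(w j : ℝ)| * ((‖b‖)⁻¹) ^ (j+1) := by
  rw [norm_mul, Complex.norm_intCast, norm_zpow,
    show (-((j:ℤ)+1)) = -(((j+1:ℕ)):ℤ) by push_cast; ring, zpow_neg, zpow_natCast, ← inv_pow]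

include hb in
lemma summable_digits (w : ℕ → ℤ) (M : ℝ) (hM : ∀ j, |(w j : ℝ)| ≤ M) :
    Summable (fun j : ℕ => (w j : ℂ) * b ^ (-((j : ℤ) + 1))) := by
  have hb0 : (0:ℝ) < ‖b‖ := by linarith
  set r : ℝ := (‖b‖)⁻¹ with hr
  have hr0 : 0 ≤ r := by positivity
  have hr1 : r < 1 := inv_lt_one_of_one_lt₀ (by linarith)
  have hgeo : Summable (fun j : ℕ => (M*r) * r^j) :=
    (summable_geometric_of_lt_one hr0 hr1).mul_left _
  have hle : ∀ j : ℕ, ‖(w j : ℂ) * b ^ (-((j : ℤ) + 1))‖ ≤ (M*r)*r^j := by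
    intro j
    rw [key_abs w j, pow_succ]
    calc |(w j : ℝ)| * (r ^ j * r) ≤ M * (r ^ j * r) :=
          mul_le_mul_of_nonneg_right (hM j) (by positivity)
      _ = (M * r) * r ^ j := by ring
  exact Summable.of_norm (Summable.of_nonneg_of_le (fun j => norm_nonneg _) hle hgeo)

include hb in
lemma tsum_norm_bound (w : ℕ → ℤ) (M : ℝ) (hM : ∀ j, |(w j : ℝ)| ≤ M) :
    ‖∑' j : ℕ, (w j : ℂ) * b ^ (-((j : ℤ) + 1))‖ ≤ M * (‖b‖ - 1)⁻¹ := by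
  have hb0 : (0:ℝ) < ‖b‖ := by linarith
  have hM0 : 0 ≤ M := le_trans (abs_nonneg _) (hM 0)
  set r : ℝ := (‖b‖)⁻¹ with hr
  have hr0 : 0 ≤ r := by positivity
  have hr1 : r < 1 := inv_lt_one_of_one_lt₀ (by linarith)
  have hgeo : Summable (fun j : ℕ => (M*r) * r^j) :=
    (summable_geometric_of_lt_one hr0 hr1).mul_left _
  have hle : ∀ j : ℕ, ‖(w j : ℂ) * b ^ (-((j : ℤ) + 1))‖ ≤ (M*r)*r^j := by
    intro j
    rw [key_abs w j, pow_succ]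
    calc |(w j : ℝ)| * (r ^ j * r) ≤ M * (r ^ j * r) :=
          mul_le_mul_of_nonneg_right (hM j) (by positivity)
      _ = (M * r) * r ^ j := by ring
  have hsnorm : Summable (fun j : ℕ => ‖(w j : ℂ) * b ^ (-((j : ℤ) + 1))‖) :=
    Summable.of_nonneg_of_le (fun j => norm_nonneg _) hle hgeo
  have h1 := norm_tsum_le_tsum_norm hsnorm
  have h2 : (∑' j : ℕ, ‖(w j : ℂ) * b ^ (-((j : ℤ) + 1))‖) ≤ ∑' j : ℕ, (M * r) * r ^ j :=
    Summable.tsum_le_tsum hle hsnorm hgeo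
  have h3 : (∑' j : ℕ, (M * r) * r ^ j) = (M * r) * (1 - r)⁻¹ := by
    rw [tsum_mul_left, tsum_geometric_of_lt_one hr0 hr1]
  have h4 : (M * r) * (1 - r)⁻¹ = M * (‖b‖ - 1)⁻¹ := by
    rw [hr]
    have hne : ‖b‖ ≠ 0 := by linarith
    have hne1 : ‖b‖ - 1 ≠ 0 := by intro h; nlinarith
    have h1r : 1 - (‖b‖)⁻¹ ≠ 0 := by
      intro h
      have h' : (1 - (‖b‖)⁻¹) * ‖b‖ = 0 * ‖b‖ := by rw [h]
      rw [sub_mul, one_mul, inv_mul_cancel₀ hne, zero_mul] at h'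
      nlinarith
    field_simp
  linarith
end toolkit


def XYseq (n : ℤ) (c : ℕ → ℤ) : ℕ → ℤ × ℤ
  | 0 => (0, 0)
  | m+1 => ((-n) * (XYseq n c m).1 - (XYseq n c m).2 - c m,
            (XYseq n c m).1 - n * (XYseq n c m).2)

lemma XYseq_succ (n : ℤ) (c : ℕ → ℤ) (m : ℕ) :
    XYseq n c (m+1) = ((-n) * (XYseq n c m).1 - (XYseq n c m).2 - c m,
      (XYseq n c m).1 - n * (XYseq n c m).2) := rfl

section facts
variable {n : ℕ} (hn : 2 ≤ n)

include hn in
lemma abs_b_sq : (‖(-(n:ℂ) + Complex.I)‖)^2 = (n:ℝ)^2 + 1 := by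
  rw [Complex.sq_norm]
  simp [Complex.normSq_apply]
  ring

include hn in
lemma abs_b_ge2 : 2 ≤ ‖(-(n:ℂ) + Complex.I)‖ := by
  have h := abs_b_sq hn
  have h0 := norm_nonneg (-(n:ℂ) + Complex.I)
  have hn' : (2:ℝ) ≤ (n:ℝ) := by exact_mod_cast hn
  nlinarith

include hn in
lemma abs_b_le : ‖(-(n:ℂ) + Complex.I)‖ ≤ (n:ℝ) + 1/2 := by
  have h := abs_b_sq hn
  have h0 := norm_nonneg (-(n:ℂ) + Complex.I)
  have hn' : (2:ℝ) ≤ (n:ℝ) := by exact_mod_cast hn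
  nlinarith
end facts

lemma coreNeg (n g d x2 x3 x4 x5 : ℤ) (hn : 2 ≤ n)
    (hg : (5 ≤ n ∧ g = 3) ∨ (n < 5 ∧ g = 4))
    (hd : g ≤ |d|)
    (h1 : d^2 ≤ 4*n^2+8*n+12)
    (h2 : x2^2 + d^2 ≤ 4*n^2+8*n+12)
    (hc1b : |x2 + n*d| ≤ 2*n^2)
    (h3 : x3^2 + (x2 - n*d)^2 ≤ 4*n^2+8*n+12)
    (h4 : x4^2 + (x3 - n*(x2 - n*d))^2 ≤ 4*n^2+8*n+12)
    (h5 : x5^2 + (x4 - n*(x3 - n*(x2 - n*d)))^2 ≤ 4*n^2+8*n+12) : False := by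
  rcases abs_cases d with ⟨he, _⟩ | ⟨he, _⟩
  · exact corePos n g d x2 x3 x4 x5 hn hg (he ▸ hd) h1 h2 hc1b h3 h4 h5
  · apply corePos n g (-d) (-x2) (-x3) (-x4) (-x5) hn hg (he ▸ hd)
    · rw [neg_sq]; exact h1
    · rw [neg_sq, neg_sq]; exact h2
    · rw [show -x2 + n*(-d) = -(x2 + n*d) by ring, abs_neg]; exact hc1b
    · rw [neg_sq, show -x2 - n*(-d) = -(x2 - n*d) by ring, neg_sq]; exact h3
    · rw [neg_sq, show -x3 - n*(-x2 - n*(-d)) = -(x3 - n*(x2 - n*d)) by ring, neg_sq]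
      exact h4
    · rw [neg_sq,
        show -x4 - n*(-x3 - n*(-x2 - n*(-d))) = -(x4 - n*(x3 - n*(x2 - n*d))) by ring, neg_sq]
      exact h5

lemma uniqueness (n : ℕ) (hn : 2 ≤ n) (g : ℤ)
    (hg : (5 ≤ (n:ℤ) ∧ g = 3) ∨ ((n:ℤ) < 5 ∧ g = 4))
    (c : ℕ → ℤ)
    (hbd : ∀ j, |c j| ≤ 2*(n:ℤ)^2)
    (hq : ∀ j, c j = 0 ∨ g ≤ |c j|)
    (h0 : ∑' j : ℕ, (c j : ℂ) * (-(n:ℂ) + Complex.I) ^ (-((j : ℤ) + 1)) = 0) :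
    ∀ j, c j = 0 := by
  classical
  set b : ℂ := -(n:ℂ) + Complex.I with hbdef
  have hb : 2 ≤ ‖b‖ := abs_b_ge2 hn
  have hble : ‖b‖ ≤ (n:ℝ) + 1/2 := abs_b_le hn
  have hbsq : (‖b‖)^2 = (n:ℝ)^2 + 1 := abs_b_sq hn
  have hb0 : b ≠ 0 := by
    intro h; rw [h] at hb; simp at hb; linarith
  have hMr : ∀ (m : ℕ) (j : ℕ), |((c (m+j) : ℤ) : ℝ)| ≤ 2*(n:ℝ)^2 := by
    intro m j
    have := hbd (m+j)
    calc |((c (m+j) : ℤ) : ℝ)| = ((|c (m+j)| : ℤ) : ℝ) := by push_cast; rfl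
      _ ≤ ((2*(n:ℤ)^2 : ℤ) : ℝ) := by exact_mod_cast this
      _ = 2*(n:ℝ)^2 := by push_cast; ring
  set T : ℕ → ℂ := fun m => ∑' j : ℕ, (c (m+j) : ℂ) * b ^ (-((j : ℤ) + 1)) with hTdef
  have hTsum : ∀ m, Summable (fun j : ℕ => (c (m+j) : ℂ) * b ^ (-((j : ℤ) + 1))) :=
    fun m => summable_digits hb _ _ (hMr m)
  have hT0 : T 0 = 0 := by
    rw [hTdef]
    simpa [Nat.zero_add] using h0
  have hTrec : ∀ m, T (m+1) = b * T m - c m := by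
    intro m
    have e1 : (∑' j : ℕ, (c (m+j) : ℂ) * b ^ (-((j:ℤ)+1)))
        = (c (m+0) : ℂ) * b ^ (-(((0:ℕ):ℤ) + 1))
          + ∑' j : ℕ, (c (m+(j+1)) : ℂ) * b ^ (-(((j+1:ℕ):ℤ) + 1)) :=
      Summable.tsum_eq_zero_add (hTsum m)
    have h1 : (c (m+0) : ℂ) * b ^ (-(((0:ℕ):ℤ) + 1)) = (c m : ℂ) * b⁻¹ := by
      norm_num
    have h2 : (∑' j : ℕ, (c (m+(j+1)) : ℂ) * b ^ (-(((j+1:ℕ):ℤ) + 1)))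
        = (∑' j : ℕ, (c ((m+1)+j) : ℂ) * b ^ (-((j:ℤ)+1))) * b⁻¹ := by
      rw [← tsum_mul_right]
      apply tsum_congr
      intro j
      rw [show m+(j+1) = (m+1)+j from by omega,
        show (-(((j+1:ℕ):ℤ) + 1)) = (-((j:ℤ)+1)) + (-1) by push_cast; ring,
        zpow_add₀ hb0, zpow_neg_one, mul_assoc]
    rw [h1, h2] at e1
    show (∑' j : ℕ, (c ((m+1)+j) : ℂ) * b ^ (-((j:ℤ)+1)))
        = b * (∑' j : ℕ, (c (m+j) : ℂ) * b ^ (-((j:ℤ)+1))) - c m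
    rw [e1]
    field_simp
    ring
  have hTXY : ∀ m, T m = (((XYseq (n:ℤ) c m).1 : ℤ) : ℂ) + (((XYseq (n:ℤ) c m).2 : ℤ) : ℂ) * Complex.I := by
    intro m
    induction m with
    | zero => rw [hT0]; show (0:ℂ) = ((0:ℤ):ℂ) + ((0:ℤ):ℂ) * Complex.I; simp
    | succ m ih =>
      rw [hTrec m, ih, XYseq_succ]
      push_cast
      rw [hbdef]
      linear_combination (((XYseq (n:ℤ) c m).2 : ℤ) : ℂ) * Complex.I_sq
  have hB : ∀ m, ((XYseq (n:ℤ) c m).1)^2 + ((XYseq (n:ℤ) c m).2)^2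
      ≤ 4*(n:ℤ)^2 + 8*(n:ℤ) + 12 := by
    intro m
    have habs : ‖T m‖ ≤ (2*(n:ℝ)^2) * (‖b‖ - 1)⁻¹ :=
      tsum_norm_bound hb _ _ (hMr m)
    have hfac : (‖b‖ - 1) * (‖b‖ + 1) = (n:ℝ)^2 := by
      linear_combination hbsq
    have hs1ne : ‖b‖ - 1 ≠ 0 := by intro h; nlinarith
    have hn0 : (n:ℝ) ≠ 0 := by
      have : (2:ℝ) ≤ (n:ℝ) := by exact_mod_cast hn
      linarith
    have hid : (2*(n:ℝ)^2) * (‖b‖ - 1)⁻¹ = 2*(‖b‖ + 1) := by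
      field_simp
      linarith [hbsq]
    have hnormSq : Complex.normSq (T m)
        = (((XYseq (n:ℤ) c m).1 : ℝ))^2 + (((XYseq (n:ℤ) c m).2 : ℝ))^2 := by
      rw [hTXY m,
        show ((((XYseq (n:ℤ) c m).1 : ℤ)) : ℂ) + ((((XYseq (n:ℤ) c m).2 : ℤ)) : ℂ) * Complex.I
          = ((((XYseq (n:ℤ) c m).1 : ℤ) : ℝ) : ℂ) + ((((XYseq (n:ℤ) c m).2 : ℤ) : ℝ) : ℂ) * Complex.I
          by push_cast; ring]
      rw [Complex.normSq_add_mul_I]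
    have hsq : (((XYseq (n:ℤ) c m).1 : ℝ))^2 + (((XYseq (n:ℤ) c m).2 : ℝ))^2
        ≤ (2*(‖b‖ + 1))^2 := by
      rw [← hnormSq, ← Complex.sq_norm]
      rw [hid] at habs
      have h0' := norm_nonneg (T m)
      nlinarith
    have hABle : (2*(‖b‖ + 1))^2 ≤ 4*(n:ℝ)^2 + 8*(n:ℝ) + 12 := by nlinarith
    have : (((XYseq (n:ℤ) c m).1 : ℝ))^2 + (((XYseq (n:ℤ) c m).2 : ℝ))^2
        ≤ 4*(n:ℝ)^2 + 8*(n:ℝ) + 12 := le_trans hsq hABle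
    exact_mod_cast this
  -- conclude
  intro j
  by_contra hcj
  have hEx : ∃ k, c k ≠ 0 := ⟨j, hcj⟩
  set m1 := Nat.find hEx with hm1
  have hcm1 : c m1 ≠ 0 := Nat.find_spec hEx
  have hzero : ∀ k, k ≤ m1 → XYseq (n:ℤ) c k = (0,0) := by
    intro k
    induction k with
    | zero => intro _; rfl
    | succ k ih =>
      intro hk
      have hck : c k = 0 := by
        have := Nat.find_min hEx (show k < m1 from by omega)
        simpa using this
      rw [XYseq_succ, ih (by omega), hck]
      simp
  have hcrel : ∀ m, c m = -((XYseq (n:ℤ) c (m+1)).1 + (n:ℤ)*(XYseq (n:ℤ) c m).1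
      + (XYseq (n:ℤ) c m).2) := by
    intro m; rw [XYseq_succ]; ring
  have hx1 : (XYseq (n:ℤ) c (m1+1)).1 = -(c m1) := by
    rw [XYseq_succ, hzero m1 le_rfl]; ring
  have hy1 : (XYseq (n:ℤ) c (m1+1)).2 = 0 := by
    rw [XYseq_succ, hzero m1 le_rfl]; ring
  have hY2 : (XYseq (n:ℤ) c (m1+1+1)).2 = (XYseq (n:ℤ) c (m1+1)).1 := by
    rw [XYseq_succ, hy1]; ring
  have hY3 : (XYseq (n:ℤ) c (m1+1+1+1)).2
      = (XYseq (n:ℤ) c (m1+1+1)).1 - (n:ℤ)*(XYseq (n:ℤ) c (m1+1)).1 := by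
    rw [XYseq_succ, hY2]
  have hY4 : (XYseq (n:ℤ) c (m1+1+1+1+1)).2
      = (XYseq (n:ℤ) c (m1+1+1+1)).1
        - (n:ℤ)*((XYseq (n:ℤ) c (m1+1+1)).1 - (n:ℤ)*(XYseq (n:ℤ) c (m1+1)).1) := by
    rw [XYseq_succ, hY3]
  have hY5 : (XYseq (n:ℤ) c (m1+1+1+1+1+1)).2
      = (XYseq (n:ℤ) c (m1+1+1+1+1)).1
        - (n:ℤ)*((XYseq (n:ℤ) c (m1+1+1+1)).1
          - (n:ℤ)*((XYseq (n:ℤ) c (m1+1+1)).1 - (n:ℤ)*(XYseq (n:ℤ) c (m1+1)).1)) := by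
    rw [XYseq_succ, hY4]
  have hnZ : (2:ℤ) ≤ (n:ℤ) := by exact_mod_cast hn
  refine coreNeg (n:ℤ) g ((XYseq (n:ℤ) c (m1+1)).1) ((XYseq (n:ℤ) c (m1+1+1)).1)
      ((XYseq (n:ℤ) c (m1+1+1+1)).1) ((XYseq (n:ℤ) c (m1+1+1+1+1)).1)
      ((XYseq (n:ℤ) c (m1+1+1+1+1+1)).1) hnZ hg ?_ ?_ ?_ ?_ ?_ ?_ ?_
  · rw [hx1, abs_neg]
    rcases hq m1 with h | h
    · exact absurd h hcm1
    · exact h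
  · have h := hB (m1+1); rw [hy1] at h; simpa using h
  · have h := hB (m1+1+1); rw [hY2] at h; exact h
  · have hkey : (XYseq (n:ℤ) c (m1+1+1)).1 + (n:ℤ)*(XYseq (n:ℤ) c (m1+1)).1
        = -(c (m1+1)) := by
      rw [hcrel (m1+1), hy1]; ring
    rw [hkey, abs_neg]
    exact hbd (m1+1)
  · have h := hB (m1+1+1+1); rw [hY3] at h; exact h
  · have h := hB (m1+1+1+1+1); rw [hY4] at h; exact h
  · have h := hB (m1+1+1+1+1+1); rw [hY5] at h; exact h


section toolkit2
variable {b : ℂ}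

lemma piSum_add' (w v : ℕ → ℤ)
    (hw : Summable fun j : ℕ => (w j : ℂ) * b ^ (-((j:ℤ)+1)))
    (hv : Summable fun j : ℕ => (v j : ℂ) * b ^ (-((j:ℤ)+1))) :
    (∑' j : ℕ, ((w j + v j : ℤ) : ℂ) * b ^ (-((j:ℤ)+1)))
      = (∑' j : ℕ, (w j : ℂ) * b ^ (-((j:ℤ)+1))) + ∑' j : ℕ, (v j : ℂ) * b ^ (-((j:ℤ)+1)) := by
  rw [← Summable.tsum_add hw hv]
  exact tsum_congr fun j => by push_cast; ring

lemma piSum_sub' (w v : ℕ → ℤ)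
    (hw : Summable fun j : ℕ => (w j : ℂ) * b ^ (-((j:ℤ)+1)))
    (hv : Summable fun j : ℕ => (v j : ℂ) * b ^ (-((j:ℤ)+1))) :
    (∑' j : ℕ, ((w j - v j : ℤ) : ℂ) * b ^ (-((j:ℤ)+1)))
      = (∑' j : ℕ, (w j : ℂ) * b ^ (-((j:ℤ)+1))) - ∑' j : ℕ, (v j : ℂ) * b ^ (-((j:ℤ)+1)) := by
  rw [← Summable.tsum_sub hw hv]
  exact tsum_congr fun j => by push_cast; ring

lemma piSum_split (hb0 : b ≠ 0) (w : ℕ → ℤ) (p : ℕ)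
    (hw : Summable fun j : ℕ => (w j : ℂ) * b ^ (-((j:ℤ)+1))) :
    (∑' j : ℕ, (w j : ℂ) * b ^ (-((j:ℤ)+1)))
      = (∑ ℓ ∈ Finset.range p, (w ℓ : ℂ) * b ^ (-((ℓ:ℤ)+1)))
        + b ^ (-(p:ℤ)) * ∑' j : ℕ, (w (j+p) : ℂ) * b ^ (-((j:ℤ)+1)) := by
  rw [← Summable.sum_add_tsum_nat_add p hw]
  congr 1
  rw [← tsum_mul_left]
  apply tsum_congr
  intro j
  rw [show (-((((j+p) : ℕ):ℤ)+1)) = (-((p:ℤ))) + (-((j:ℤ)+1)) by push_cast; ring,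
    zpow_add₀ hb0]
  ring

lemma piSum_finsupp (w : ℕ → ℤ) (p : ℕ) (hw : ∀ k, p ≤ k → w k = 0) :
    (∑' j : ℕ, (w j : ℂ) * b ^ (-((j:ℤ)+1)))
      = ∑ ℓ ∈ Finset.range p, (w ℓ : ℂ) * b ^ (-((ℓ:ℤ)+1)) := by
  apply tsum_eq_sum
  intro k hk
  rw [hw k (by simpa using hk)]
  simp

lemma summable_finsupp (w : ℕ → ℤ) (p : ℕ) (hw : ∀ k, p ≤ k → w k = 0) :
    Summable fun j : ℕ => (w j : ℂ) * b ^ (-((j:ℤ)+1)) := by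
  apply summable_of_ne_finset_zero (s := Finset.range p)
  intro k hk
  rw [hw k (by simpa using hk)]
  simp
end toolkit2



section keysec
variable {b : ℂ}

lemma keyLemma (hb : 2 ≤ ‖b‖) (p : ℕ)
    (v w βs : ℕ → ℤ) (aa uu : Fin p → ℤ) (Mv Mw Mβ : ℝ)
    (hMv : ∀ j, |((v j : ℤ) : ℝ)| ≤ Mv) (hMw : ∀ j, |((w j : ℤ) : ℝ)| ≤ Mw)
    (hMβ : ∀ j, |((βs j : ℤ) : ℝ)| ≤ Mβ)
    (hi : ∀ ℓ : Fin p, v ℓ = aa ℓ + βs ℓ)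
    (hii : ∀ k : ℕ, v (k + p) = ((w k - βs k) + (if h : k < p then uu ⟨k, h⟩ else 0)) + βs (k + p)) :
    piSum b v = b ^ (-(p:ℤ)) * (piSum b w
      + (∑ ℓ : Fin p, ((aa ℓ : ℂ) * b ^ ((p:ℤ) - ((ℓ:ℤ)+1)) + (uu ℓ : ℂ) * b ^ (-((ℓ:ℤ)+1))))
      - piSum b βs) + piSum b βs := by
  have hb0 : b ≠ 0 := by
    intro h; rw [h] at hb; simp at hb; linarith
  -- abbreviations
  set ah : ℕ → ℤ := fun k => if h : k < p then aa ⟨k, h⟩ else 0 with hah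
  set uh : ℕ → ℤ := fun k => if h : k < p then uu ⟨k, h⟩ else 0 with huh
  -- summabilities
  have hsv := summable_digits hb v Mv hMv
  have hsw := summable_digits hb w Mw hMw
  have hsβ := summable_digits hb βs Mβ hMβ
  have hsvs := summable_digits hb (fun k => v (k+p)) Mv (fun j => hMv (j+p))
  have hsβs := summable_digits hb (fun k => βs (k+p)) Mβ (fun j => hMβ (j+p))
  have hsuh : Summable fun j : ℕ => ((uh j : ℤ) : ℂ) * b ^ (-((j:ℤ)+1)) :=
    summable_finsupp uh p (fun k hk => by rw [huh]; simp only; rw [dif_neg (by omega)])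
  have hswβ : Summable fun j : ℕ => ((w j - βs j : ℤ) : ℂ) * b ^ (-((j:ℤ)+1)) := by
    apply Summable.congr (hsw.sub hsβ)
    intro j; push_cast; ring
  have hswβu : Summable fun j : ℕ => (((w j - βs j) + uh j : ℤ) : ℂ) * b ^ (-((j:ℤ)+1)) := by
    apply Summable.congr (hswβ.add hsuh)
    intro j; push_cast; ring
  -- E1 : split v
  have E1 := piSum_split hb0 v p hsv
  -- E2 : split βs
  have E2 := piSum_split hb0 βs p hsβ
  -- E3 : tail of v
  have hfun : (fun k => v (k + p)) = fun k => (((w k - βs k) + uh k) + βs (k + p)) := by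
    funext k; rw [hii k]
  have E3a : (∑' j : ℕ, ((v (j+p) : ℤ) : ℂ) * b ^ (-((j:ℤ)+1)))
      = ∑' j : ℕ, ((((w j - βs j) + uh j) + βs (j+p) : ℤ) : ℂ) * b ^ (-((j:ℤ)+1)) := by
    apply tsum_congr; intro j; rw [hii j]
  have E3b : (∑' j : ℕ, ((((w j - βs j) + uh j) + βs (j+p) : ℤ) : ℂ) * b ^ (-((j:ℤ)+1)))
      = (∑' j : ℕ, (((w j - βs j) + uh j : ℤ) : ℂ) * b ^ (-((j:ℤ)+1)))
        + ∑' j : ℕ, ((βs (j+p) : ℤ) : ℂ) * b ^ (-((j:ℤ)+1)) :=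
    piSum_add' _ _ hswβu hsβs
  have E3c : (∑' j : ℕ, (((w j - βs j) + uh j : ℤ) : ℂ) * b ^ (-((j:ℤ)+1)))
      = (∑' j : ℕ, ((w j - βs j : ℤ) : ℂ) * b ^ (-((j:ℤ)+1)))
        + ∑' j : ℕ, ((uh j : ℤ) : ℂ) * b ^ (-((j:ℤ)+1)) :=
    piSum_add' _ _ hswβ hsuh
  have E3d : (∑' j : ℕ, ((w j - βs j : ℤ) : ℂ) * b ^ (-((j:ℤ)+1)))
      = (∑' j : ℕ, ((w j : ℤ) : ℂ) * b ^ (-((j:ℤ)+1)))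
        - ∑' j : ℕ, ((βs j : ℤ) : ℂ) * b ^ (-((j:ℤ)+1)) :=
    piSum_sub' _ _ hsw hsβ
  have E3e : (∑' j : ℕ, ((uh j : ℤ) : ℂ) * b ^ (-((j:ℤ)+1)))
      = ∑ ℓ ∈ Finset.range p, ((uh ℓ : ℤ) : ℂ) * b ^ (-((ℓ:ℤ)+1)) :=
    piSum_finsupp uh p (fun k hk => by rw [huh]; simp only; rw [dif_neg (by omega)])
  -- E4 : head of v
  have E4 : (∑ ℓ ∈ Finset.range p, ((v ℓ : ℤ) : ℂ) * b ^ (-((ℓ:ℤ)+1)))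
      = (∑ ℓ ∈ Finset.range p, ((ah ℓ : ℤ) : ℂ) * b ^ (-((ℓ:ℤ)+1)))
        + ∑ ℓ ∈ Finset.range p, ((βs ℓ : ℤ) : ℂ) * b ^ (-((ℓ:ℤ)+1)) := by
    rw [← Finset.sum_add_distrib]
    apply Finset.sum_congr rfl
    intro ℓ hℓ
    have hℓp : ℓ < p := Finset.mem_range.mp hℓ
    rw [hah]; simp only
    rw [dif_pos hℓp, hi ⟨ℓ, hℓp⟩]
    push_cast; ring
  -- E5 : the Fin p sum
  have E5 : (∑ ℓ : Fin p, ((aa ℓ : ℂ) * b ^ ((p:ℤ) - ((ℓ:ℤ)+1)) + (uu ℓ : ℂ) * b ^ (-((ℓ:ℤ)+1))))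
      = b ^ ((p:ℤ)) * (∑ ℓ ∈ Finset.range p, ((ah ℓ : ℤ) : ℂ) * b ^ (-((ℓ:ℤ)+1)))
        + ∑ ℓ ∈ Finset.range p, ((uh ℓ : ℤ) : ℂ) * b ^ (-((ℓ:ℤ)+1)) := by
    rw [Finset.mul_sum, ← Finset.sum_add_distrib]
    rw [← Fin.sum_univ_eq_sum_range (fun k =>
      b ^ ((p:ℤ)) * (((ah k : ℤ) : ℂ) * b ^ (-((k:ℤ)+1))) + ((uh k : ℤ) : ℂ) * b ^ (-((k:ℤ)+1))) p]
    apply Finset.sum_congr rfl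
    intro ℓ _
    rw [hah, huh]; simp only
    rw [dif_pos ℓ.isLt, dif_pos ℓ.isLt]
    rw [show ((p:ℤ) - (((ℓ:ℕ):ℤ)+1)) = (p:ℤ) + (-(((ℓ:ℕ):ℤ)+1)) by ring, zpow_add₀ hb0]
    ring
  -- E6
  have E6 : b ^ (-(p:ℤ)) * b ^ ((p:ℤ)) = 1 := by
    rw [← zpow_add₀ hb0]; norm_num
  -- assemble
  show (∑' j : ℕ, ((v j : ℤ) : ℂ) * b ^ (-((j:ℤ)+1)))
      = b ^ (-(p:ℤ)) * ((∑' j : ℕ, ((w j : ℤ) : ℂ) * b ^ (-((j:ℤ)+1)))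
        + (∑ ℓ : Fin p, ((aa ℓ : ℂ) * b ^ ((p:ℤ) - ((ℓ:ℤ)+1)) + (uu ℓ : ℂ) * b ^ (-((ℓ:ℤ)+1))))
        - ∑' j : ℕ, ((βs j : ℤ) : ℂ) * b ^ (-((j:ℤ)+1)))
      + ∑' j : ℕ, ((βs j : ℤ) : ℂ) * b ^ (-((j:ℤ)+1))
  rw [E3d] at E3c
  rw [E3e] at E3c
  rw [E3c] at E3b
  rw [E3b] at E3a
  rw [E3a] at E1
  rw [E4] at E1
  rw [E1, E2, E5]
  linear_combination (-(∑ ℓ ∈ Finset.range p, ((ah ℓ : ℤ) : ℂ) * b ^ (-((ℓ:ℤ)+1)))) * E6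
end keysec

section main

lemma char_mem (n : ℕ) (hn : 2 ≤ n) (D : Set ℤ) (hD : D ⊆ Set.Icc 0 ((n : ℤ) ^ 2))
    (hsparse : Sparse n (D - D)) (α : ℕ → ℤ) (hα : ∀ j, α j ∈ D - D) (z : ℂ) :
    (z ∈ restrictedDigitSet n D ∩
      (restrictedDigitSet n D + {piSum (-(n : ℂ) + Complex.I) α}))
    ↔ ∃ m : ℕ → ℤ, (∀ j, m j ∈ D ∧ m j - α j ∈ D)
        ∧ z = piSum (-(n : ℂ) + Complex.I) m := by
  have hb : 2 ≤ ‖(-(n:ℂ) + Complex.I)‖ := abs_b_ge2 hn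
  have hDb : ∀ x, x ∈ D → 0 ≤ x ∧ x ≤ (n:ℤ)^2 := fun x hx => ⟨(hD hx).1, (hD hx).2⟩
  have hcastD : ∀ (w : ℕ → ℤ), (∀ j, w j ∈ D) → ∀ j, |((w j : ℤ):ℝ)| ≤ ((n:ℝ)^2) := by
    intro w hw j
    have h := hDb _ (hw j)
    have : |w j| ≤ (n:ℤ)^2 := by rw [abs_le]; constructor <;> linarith [h.1, h.2]
    calc |((w j : ℤ):ℝ)| = ((|w j| : ℤ) : ℝ) := by push_cast; rfl
      _ ≤ (((n:ℤ)^2 : ℤ) : ℝ) := by exact_mod_cast this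
      _ = (n:ℝ)^2 := by push_cast; ring
  have hαb : ∀ j, |α j| ≤ (n:ℤ)^2 := by
    intro j
    obtain ⟨u1, hu1, v1, hv1, he⟩ := Set.mem_sub.mp (hα j)
    have h1 := hDb u1 hu1; have h2 := hDb v1 hv1
    rw [← he, abs_le]; constructor <;> linarith [h1.1, h1.2, h2.1, h2.2]
  have hcastα : ∀ j, |((α j : ℤ):ℝ)| ≤ ((n:ℝ)^2) := by
    intro j
    calc |((α j : ℤ):ℝ)| = ((|α j| : ℤ) : ℝ) := by push_cast; rfl
      _ ≤ (((n:ℤ)^2 : ℤ) : ℝ) := by exact_mod_cast hαb j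
      _ = (n:ℝ)^2 := by push_cast; ring
  constructor
  · rintro ⟨⟨d, hd, rfl⟩, hz2⟩
    obtain ⟨x, hx, y, hy, hxy⟩ := Set.mem_add.mp hz2
    rw [Set.mem_singleton_iff] at hy
    subst hy
    obtain ⟨d', hd', rfl⟩ := hx
    -- hxy : piSum b d' + piSum b α = piSum b d
    set c : ℕ → ℤ := fun j => d j - (d' j + α j) with hc
    have hsd := summable_digits hb d ((n:ℝ)^2) (hcastD d hd)
    have hsd' := summable_digits hb d' ((n:ℝ)^2) (hcastD d' hd')
    have hsα := summable_digits hb α ((n:ℝ)^2) hcastα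
    have hsd'α := summable_digits hb (fun j => d' j + α j) (2*(n:ℝ)^2) (by
      intro j
      calc |((d' j + α j : ℤ):ℝ)| = |((d' j:ℤ):ℝ) + ((α j:ℤ):ℝ)| := by push_cast; ring_nf
        _ ≤ |((d' j:ℤ):ℝ)| + |((α j:ℤ):ℝ)| := abs_add_le _ _
        _ ≤ (n:ℝ)^2 + (n:ℝ)^2 := add_le_add (hcastD d' hd' j) (hcastα j)
        _ = 2*(n:ℝ)^2 := by ring)
    have h0 : (∑' j : ℕ, (c j : ℂ) * (-(n:ℂ) + Complex.I) ^ (-((j:ℤ)+1))) = 0 := by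
      have e1 := piSum_sub' (b := -(n:ℂ) + Complex.I) d (fun j => d' j + α j) hsd hsd'α
      have e2 := piSum_add' (b := -(n:ℂ) + Complex.I) d' α hsd' hsα
      show (∑' j : ℕ, ((d j - (d' j + α j) : ℤ) : ℂ) * (-(n:ℂ) + Complex.I) ^ (-((j:ℤ)+1))) = 0
      rw [e1, e2]
      have hxy' : piSum (-(n:ℂ)+Complex.I) d' + piSum (-(n:ℂ)+Complex.I) α
          = piSum (-(n:ℂ)+Complex.I) d := hxy
      unfold piSum at hxy'
      rw [← hxy']
      ring
    have hg : ∃ g : ℤ, ((5 ≤ (n:ℤ) ∧ g = 3) ∨ ((n:ℤ) < 5 ∧ g = 4)) := by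
      rcases le_or_gt 5 (n:ℤ) with h | h
      exacts [⟨3, Or.inl ⟨h, rfl⟩⟩, ⟨4, Or.inr ⟨h, rfl⟩⟩]
    obtain ⟨g, hg⟩ := hg
    have hquant : ∀ j, c j = 0 ∨ g ≤ |c j| := by
      intro j
      by_cases hcj : c j = 0
      · exact Or.inl hcj
      · right
        have hδ : (d j - d' j) ∈ D - D := Set.mem_sub.mpr ⟨d j, hd j, d' j, hd' j, rfl⟩
        have hne : (d j - d' j) ≠ α j := by
          intro h; apply hcj; rw [hc]; simp only; omega
        have := hsparse _ hδ _ (hα j) hne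
        have hcj' : c j = (d j - d' j) - α j := by rw [hc]; ring
        rw [hcj']
        rcases hg with ⟨h5, rfl⟩ | ⟨h5, rfl⟩
        · have h5' : 5 ≤ n := by exact_mod_cast h5
          have := this.1 h5'
          omega
        · have h5' : n < 5 := by exact_mod_cast h5
          have := this.2 (by omega)
          omega
    have hbd : ∀ j, |c j| ≤ 2*(n:ℤ)^2 := by
      intro j
      have h1 := hDb _ (hd j); have h2 := hDb _ (hd' j); have h3 := hαb j
      have : c j = (d j - d' j) - α j := by rw [hc]; ring
      rw [this, abs_le]
      rw [abs_le] at h3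
      constructor <;> linarith [h1.1, h1.2, h2.1, h2.2, h3.1, h3.2]
    have hczero := uniqueness n hn g hg c hbd hquant h0
    refine ⟨d, fun j => ⟨hd j, ?_⟩, rfl⟩
    have := hczero j
    have hj : d j - α j = d' j := by rw [hc] at this; simp only at this; omega
    rw [hj]; exact hd' j
  · rintro ⟨m, hm, rfl⟩
    have hsm := summable_digits hb m ((n:ℝ)^2) (hcastD m (fun j => (hm j).1))
    have hsα := summable_digits hb α ((n:ℝ)^2) hcastα
    have hsmα := summable_digits hb (fun j => m j - α j) ((n:ℝ)^2)
      (hcastD _ (fun j => (hm j).2))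
    constructor
    · exact ⟨m, fun j => (hm j).1, rfl⟩
    · apply Set.mem_add.mpr
      refine ⟨piSum (-(n:ℂ)+Complex.I) (fun j => m j - α j),
        ⟨fun j => m j - α j, fun j => (hm j).2, rfl⟩,
        piSum (-(n:ℂ)+Complex.I) α, rfl, ?_⟩
      have := piSum_sub' (b := -(n:ℂ) + Complex.I) m α hsm hsα
      show piSum (-(n:ℂ)+Complex.I) (fun j => m j - α j) + piSum (-(n:ℂ)+Complex.I) α
        = piSum (-(n:ℂ)+Complex.I) m
      unfold piSum
      rw [show (∑' j : ℕ, ((fun j => m j - α j) j : ℂ) * (-(n:ℂ) + Complex.I) ^ (-((j:ℤ)+1)))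
        = ∑' j : ℕ, ((m j - α j : ℤ) : ℂ) * (-(n:ℂ) + Complex.I) ^ (-((j:ℤ)+1)) from rfl]
      rw [this]
      ring
end main

theorem stmt_19 (n : ℕ) (hn : 2 ≤ n) (D : Set ℤ)
    (hD : D ⊆ Set.Icc 0 ((n : ℤ) ^ 2))
    (hsparse : Sparse n (D - D))
    (α : ℕ → ℤ) (hα : ∀ j, α j ∈ D - D)
    (Cα : Set ℂ)
    (hCα : Cα = restrictedDigitSet n D ∩
      (restrictedDigitSet n D + {piSum (-(n : ℂ) + Complex.I) α}))
    (β : ℕ → ℤ) (hβ : ∀ j, β j ∈ D ∩ (D + {α j}))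
    (p : ℕ) (hp : 1 ≤ p) (A U : ℕ → Set ℤ)
    (hAU : ∀ ℓ < p, (A ℓ).Nonempty ∧ (A ℓ).Finite ∧ (U ℓ).Nonempty ∧ (U ℓ).Finite)
    (hsep₁ : ∀ ℓ < p, (D ∩ (D + {α ℓ})) - {β ℓ} = A ℓ)
    (hsep₂ : ∀ j, p ≤ j → (D ∩ (D + {α j})) - {β j} = A (j % p) + U (j % p)) :
    Cα = ⋃ a : Fin p → ℤ, ⋃ u : Fin p → ℤ,
      ⋃ (_ : ∀ ℓ : Fin p, a ℓ ∈ A (ℓ : ℕ) ∧ u ℓ ∈ U (ℓ : ℕ)),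
      (fun x => (-(n : ℂ) + Complex.I) ^ (-(p : ℤ)) *
        (x + (∑ ℓ : Fin p, ((a ℓ : ℂ) * (-(n : ℂ) + Complex.I) ^ ((p : ℤ) - ((ℓ : ℤ) + 1)) +
          (u ℓ : ℂ) * (-(n : ℂ) + Complex.I) ^ (-((ℓ : ℤ) + 1)))) -
          piSum (-(n : ℂ) + Complex.I) β) +
        piSum (-(n : ℂ) + Complex.I) β) '' Cα := by
  classical
  have hb : 2 ≤ ‖(-(n:ℂ) + Complex.I)‖ := abs_b_ge2 hn
  have hDb : ∀ x, x ∈ D → 0 ≤ x ∧ x ≤ (n:ℤ)^2 := fun x hx => ⟨(hD hx).1, (hD hx).2⟩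
  have hcastD : ∀ (w : ℕ → ℤ), (∀ j, w j ∈ D) → ∀ j, |((w j : ℤ):ℝ)| ≤ ((n:ℝ)^2) := by
    intro w hw j
    have h := hDb _ (hw j)
    have h2 : |w j| ≤ (n:ℤ)^2 := by rw [abs_le]; constructor <;> linarith [h.1, h.2]
    calc |((w j : ℤ):ℝ)| = ((|w j| : ℤ) : ℝ) := by push_cast; rfl
      _ ≤ (((n:ℤ)^2 : ℤ) : ℝ) := by exact_mod_cast h2
      _ = (n:ℝ)^2 := by push_cast; ring
  have hEiff : ∀ (j : ℕ) (x : ℤ), x ∈ D ∩ (D + {α j}) ↔ (x ∈ D ∧ x - α j ∈ D) := by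
    intro j x
    constructor
    · rintro ⟨h1, h2⟩
      obtain ⟨y, hy, t, ht, he⟩ := Set.mem_add.mp h2
      rw [Set.mem_singleton_iff] at ht
      subst ht
      refine ⟨h1, ?_⟩
      rw [← he]
      simpa using hy
    · rintro ⟨h1, h2⟩
      exact ⟨h1, Set.mem_add.mpr ⟨x - α j, h2, α j, rfl, by ring⟩⟩
  have hsubiff : ∀ (S : Set ℤ) (t x : ℤ), x ∈ S - {t} ↔ x + t ∈ S := by
    intro S t x
    constructor
    · intro h
      obtain ⟨s, hs, z, hz, he⟩ := Set.mem_sub.mp h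
      rw [Set.mem_singleton_iff] at hz
      subst hz
      rw [← he]
      simpa [sub_add_cancel] using hs
    · intro h
      exact Set.mem_sub.mpr ⟨x + t, h, t, rfl, by ring⟩
  have hAiff : ∀ ℓ, ℓ < p → ∀ k : ℤ,
      (k ∈ A ℓ ↔ ((k + β ℓ) ∈ D ∧ (k + β ℓ) - α ℓ ∈ D)) := by
    intro ℓ hℓ k
    rw [← hsep₁ ℓ hℓ, hsubiff, hEiff]
  have hAUiff : ∀ j, p ≤ j → ∀ k : ℤ,
      (k ∈ A (j % p) + U (j % p) ↔ ((k + β j) ∈ D ∧ (k + β j) - α j ∈ D)) := by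
    intro j hj k
    rw [← hsep₂ j hj, hsubiff, hEiff]
  have hβD : ∀ j, β j ∈ D ∧ β j - α j ∈ D := fun j => (hEiff j (β j)).mp (hβ j)
  have hchar : ∀ z : ℂ, z ∈ Cα ↔ ∃ m : ℕ → ℤ,
      (∀ j, m j ∈ D ∧ m j - α j ∈ D) ∧ z = piSum (-(n:ℂ)+Complex.I) m := by
    intro z; rw [hCα]; exact char_mem n hn D hD hsparse α hα z
  ext z
  simp only [Set.mem_iUnion, Set.mem_image]
  constructor
  · intro hz
    obtain ⟨m, hm, rfl⟩ := (hchar _).mp hz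
    have hdec : ∀ ℓ : Fin p, ∃ a' u' : ℤ, a' ∈ A (ℓ:ℕ) ∧ u' ∈ U (ℓ:ℕ)
        ∧ a' + u' = m ((ℓ:ℕ) + p) - β ((ℓ:ℕ) + p) := by
      intro ℓ
      have hge : p ≤ (ℓ:ℕ) + p := by omega
      have h1 : (m ((ℓ:ℕ)+p) - β ((ℓ:ℕ)+p)) ∈ A (((ℓ:ℕ)+p) % p) + U (((ℓ:ℕ)+p) % p) := by
        apply (hAUiff _ hge _).mpr
        constructor
        · rw [sub_add_cancel]; exact (hm _).1
        · rw [sub_add_cancel]; exact (hm _).2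
      rw [Nat.add_mod_right, Nat.mod_eq_of_lt ℓ.isLt] at h1
      obtain ⟨a', ha', u', hu', he'⟩ := Set.mem_add.mp h1
      exact ⟨a', u', ha', hu', he'⟩
    choose a2 u2 ha2 hu2 he2 using hdec
    refine ⟨fun ℓ : Fin p => m (ℓ:ℕ) - β (ℓ:ℕ), u2, ?_, ?_⟩
    · intro ℓ
      refine ⟨?_, hu2 ℓ⟩
      apply (hAiff (ℓ:ℕ) ℓ.isLt _).mpr
      constructor
      · rw [sub_add_cancel]; exact (hm _).1
      · rw [sub_add_cancel]; exact (hm _).2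
    · set w : ℕ → ℤ :=
        fun k => (if h : k < p then a2 ⟨k, h⟩ else m (k + p) - β (k + p)) + β k with hw
      have hwD : ∀ k, w k ∈ D ∧ w k - α k ∈ D := by
        intro k
        rw [hw]; simp only
        by_cases h : k < p
        · rw [dif_pos h]
          exact (hAiff k h _).mp (ha2 ⟨k, h⟩)
        · rw [dif_neg h]
          have hge2 : p ≤ k + p := by omega
          have h1 : (m (k+p) - β (k+p)) ∈ A ((k+p) % p) + U ((k+p) % p) := by
            apply (hAUiff _ hge2 _).mpr
            constructor
            · rw [sub_add_cancel]; exact (hm _).1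
            · rw [sub_add_cancel]; exact (hm _).2
          rw [Nat.add_mod_right] at h1
          exact (hAUiff k (by omega) _).mp h1
      have hii : ∀ k : ℕ, m (k + p)
          = ((w k - β k) + (if h : k < p then u2 ⟨k, h⟩ else 0)) + β (k + p) := by
        intro k
        rw [hw]; simp only
        by_cases h : k < p
        · rw [dif_pos h, dif_pos h]
          have h3 := he2 ⟨k, h⟩
          simp only [Fin.val_mk] at h3
          omega
        · rw [dif_neg h, dif_neg h]
          ring
      have hi : ∀ ℓ : Fin p, m (ℓ:ℕ) = (m (ℓ:ℕ) - β (ℓ:ℕ)) + β (ℓ:ℕ) :=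
        fun ℓ => (sub_add_cancel _ _).symm
      have hk := keyLemma hb p m w β (fun ℓ : Fin p => m (ℓ:ℕ) - β (ℓ:ℕ)) u2
        ((n:ℝ)^2) ((n:ℝ)^2) ((n:ℝ)^2)
        (hcastD m (fun j => (hm j).1)) (hcastD w (fun j => (hwD j).1))
        (hcastD β (fun j => (hβD j).1)) hi hii
      exact ⟨piSum (-(n:ℂ)+Complex.I) w, (hchar _).mpr ⟨w, hwD, rfl⟩, hk.symm⟩
  · rintro ⟨a, u, hau, y, hy, rfl⟩
    obtain ⟨m, hm, rfl⟩ := (hchar _).mp hy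
    set v : ℕ → ℤ := fun k => (if h : k < p then a ⟨k, h⟩
        else (m (k - p) - β (k - p)) + (if h2 : k - p < p then u ⟨k - p, h2⟩ else 0)) + β k
      with hv
    have hvD : ∀ k, v k ∈ D ∧ v k - α k ∈ D := by
      intro k
      rw [hv]; simp only
      by_cases h : k < p
      · rw [dif_pos h]
        exact (hAiff k h _).mp (hau ⟨k, h⟩).1
      · rw [dif_neg h]
        apply (hAUiff k (by omega) _).mp
        by_cases h2 : k - p < p
        · rw [dif_pos h2]
          have hmod : k % p = k - p := by
            rw [Nat.mod_eq_sub_mod (by omega : p ≤ k)]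
            exact Nat.mod_eq_of_lt h2
          rw [hmod]
          apply Set.mem_add.mpr
          refine ⟨m (k-p) - β (k-p), ?_, u ⟨k-p, h2⟩, (hau ⟨k-p,h2⟩).2, rfl⟩
          apply (hAiff (k-p) h2 _).mpr
          constructor
          · rw [sub_add_cancel]; exact (hm _).1
          · rw [sub_add_cancel]; exact (hm _).2
        · rw [dif_neg h2, add_zero]
          have hge : p ≤ k - p := by omega
          have h1 : (m (k-p) - β (k-p)) ∈ A ((k-p) % p) + U ((k-p) % p) := by
            apply (hAUiff _ hge _).mpr
            constructor
            · rw [sub_add_cancel]; exact (hm _).1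
            · rw [sub_add_cancel]; exact (hm _).2
          have hmod : (k - p) % p = k % p := (Nat.mod_eq_sub_mod (by omega : p ≤ k)).symm
          rwa [hmod] at h1
    have hii : ∀ k : ℕ, v (k + p)
        = ((m k - β k) + (if h : k < p then u ⟨k, h⟩ else 0)) + β (k + p) := by
      intro k
      rw [hv]; simp only
      rw [dif_neg (show ¬ (k + p < p) from by omega)]
      simp only [Nat.add_sub_cancel]
    have hi : ∀ ℓ : Fin p, v (ℓ:ℕ) = a ℓ + β (ℓ:ℕ) := by
      intro ℓ
      rw [hv]; simp only
      rw [dif_pos ℓ.isLt, Fin.eta]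
    have hk := keyLemma hb p v m β a u ((n:ℝ)^2) ((n:ℝ)^2) ((n:ℝ)^2)
      (hcastD v (fun j => (hvD j).1)) (hcastD m (fun j => (hm j).1))
      (hcastD β (fun j => (hβD j).1)) hi hii
    exact (hchar _).mpr ⟨v, hvD, hk.symm⟩
end
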